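/- (Comparison lemma.) Let T > 0 (possibly T = ∞), let g : ℝ → ℝ be nonnegative, continuous on [−τ, T) and differentiable on [0, T) with g′(t) ≤ γ(t)·g(t) + α(t)·g(t−τ)^p + β(t) for all t ∈ [0, T), and let h : ℝ → ℝ be continuous on [−τ, T), differentiable on [0, T), satisfy h′(t) = γ(t)·h(t) + α(t)·h(t−τ)^p + β(t) for all t ∈ [0, T), and h(t) = g(t) for all t ∈ [−τ, 0]. Then g(t) ≤ h(t) for all t ∈ [0, T). -/

import Mathlib

open Real MeasureTheory Set Filter

/-- Lemma 2.2 (comparison lemma): if `g` satisfies the delay differential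
inequality on `[0,T)` and `h` solves the corresponding delay differential
equation on `[0,T)` with `h = g` on `[−τ,0]`, then `g ≤ h` on `[0,T)`.
Here `T > 0` may be infinite, so `T : EReal`. -/
theorem stmt_2
    (τ p : ℝ) (hτ : 0 < τ) (hp : 1 < p)
    (γ α β : ℝ → ℝ)
    (hγc : Continuous γ) (hαc : Continuous α) (hβc : Continuous β)
    (hα : ∀ t, 0 ≤ α t) (hβ : ∀ t, 0 ≤ β t)
    (T : EReal) (hT : 0 < T)
    (g g' h h' : ℝ → ℝ)
    (hg0 : ∀ t : ℝ, -τ ≤ t → (t : EReal) < T → 0 ≤ g t)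
    (hgc : ContinuousOn g {t : ℝ | -τ ≤ t ∧ (t : EReal) < T})
    (hgd : ∀ t : ℝ, 0 ≤ t → (t : EReal) < T →
      HasDerivWithinAt g (g' t) {s : ℝ | 0 ≤ s ∧ (s : EReal) < T} t)
    (hgineq : ∀ t : ℝ, 0 ≤ t → (t : EReal) < T →
      g' t ≤ γ t * g t + α t * g (t - τ) ^ p + β t)
    (hhc : ContinuousOn h {t : ℝ | -τ ≤ t ∧ (t : EReal) < T})
    (hhd : ∀ t : ℝ, 0 ≤ t → (t : EReal) < T →
      HasDerivWithinAt h (h' t) {s : ℝ | 0 ≤ s ∧ (s : EReal) < T} t)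
    (hheq : ∀ t : ℝ, 0 ≤ t → (t : EReal) < T →
      h' t = γ t * h t + α t * h (t - τ) ^ p + β t)
    (hinit : ∀ t : ℝ, -τ ≤ t → t ≤ 0 → h t = g t) :
    ∀ t : ℝ, 0 ≤ t → (t : EReal) < T → g t ≤ h t := by
  -- antiderivative of γ
  set Γ : ℝ → ℝ := fun u => ∫ s in (0:ℝ)..u, γ s with hΓdef
  have hΓd : ∀ x : ℝ, HasDerivAt Γ (γ x) x := by
    intro x
    exact intervalIntegral.integral_hasDerivAt_right (hγc.intervalIntegrable 0 x)
      hγc.aestronglyMeasurable.stronglyMeasurableAtFilter hγc.continuousAt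
  have hΓc : Continuous Γ := by
    have : Differentiable ℝ Γ := fun x => (hΓd x).differentiableAt
    exact this.continuous
  -- main claim by induction on n: t ≤ n*τ
  have key : ∀ n : ℕ, ∀ t : ℝ, 0 ≤ t → t ≤ n * τ → (t : EReal) < T → g t ≤ h t := by
    intro n
    induction n with
    | zero =>
      intro t ht0 htn _
      have : t = 0 := le_antisymm (by simpa using htn) ht0
      subst this
      exact (hinit 0 (by linarith) le_rfl).ge
    | succ n ih =>
      intro t ht0 htn htT
      -- comparison of delayed values on [0, t]
      have hdel : ∀ s : ℝ, 0 ≤ s → s ≤ t → g (s - τ) ≤ h (s - τ) := by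
        intro s hs0 hst
        have hsT : (s : EReal) < T := lt_of_le_of_lt (EReal.coe_le_coe_iff.mpr hst) htT
        rcases le_or_gt (s - τ) 0 with hle | hgt
        · exact (hinit (s - τ) (by linarith) hle).ge
        · have hsτT : ((s - τ : ℝ) : EReal) < T :=
            lt_of_lt_of_le (EReal.coe_lt_coe_iff.mpr (by linarith)) hsT.le
          exact ih (s - τ) hgt.le (by push_cast at htn ⊢; linarith) hsτT
      -- the auxiliary function ψ
      set ψ : ℝ → ℝ := fun s => (g s - h s) * Real.exp (-Γ s) with hψdef
      have hsub : Icc (0:ℝ) t ⊆ {s : ℝ | -τ ≤ s ∧ (s : EReal) < T} := by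
        intro s hs
        exact ⟨by linarith [hs.1], lt_of_le_of_lt (EReal.coe_le_coe_iff.mpr hs.2) htT⟩
      have hψc : ContinuousOn ψ (Icc 0 t) := by
        apply ContinuousOn.mul
        · exact ((hgc.mono hsub).sub (hhc.mono hsub))
        · exact (hΓc.neg.rexp).continuousOn
      have hderiv : ∀ x ∈ Ioo (0:ℝ) t,
          HasDerivAt ψ ((g' x - h' x - γ x * (g x - h x)) * Real.exp (-Γ x)) x := by
        intro x hx
        have hxT : (x : EReal) < T := lt_of_lt_of_le (EReal.coe_lt_coe_iff.mpr hx.2) htT.le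
        have hnbhd : {s : ℝ | 0 ≤ s ∧ (s : EReal) < T} ∈ nhds x := by
          have hsub2 : Ioo (0:ℝ) t ⊆ {s : ℝ | 0 ≤ s ∧ (s : EReal) < T} := by
            intro s hs
            exact ⟨hs.1.le, lt_of_lt_of_le (EReal.coe_lt_coe_iff.mpr hs.2) htT.le⟩
          exact Filter.mem_of_superset (isOpen_Ioo.mem_nhds hx) hsub2
        have hgx : HasDerivAt g (g' x) x := (hgd x hx.1.le hxT).hasDerivAt hnbhd
        have hhx : HasDerivAt h (h' x) x := (hhd x hx.1.le hxT).hasDerivAt hnbhd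
        have hex : HasDerivAt (fun s => Real.exp (-Γ s)) (-γ x * Real.exp (-Γ x)) x := by
          have := ((hΓd x).neg).exp
          simpa [mul_comm] using this
        have : HasDerivAt (fun s => (g s - h s) * Real.exp (-Γ s))
            ((g' x - h' x) * Real.exp (-Γ x) + (g x - h x) * (-γ x * Real.exp (-Γ x))) x :=
          (hgx.sub hhx).mul hex
        convert this using 1
        ring
      have hψ'le : ∀ x ∈ Ioo (0:ℝ) t, deriv ψ x ≤ 0 := by
        intro x hx
        rw [(hderiv x hx).deriv]
        have hxT : (x : EReal) < T := lt_of_lt_of_le (EReal.coe_lt_coe_iff.mpr hx.2) htT.le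
        have hdiff : g' x - h' x - γ x * (g x - h x) ≤ 0 := by
          have h1 := hgineq x hx.1.le hxT
          have h2 := hheq x hx.1.le hxT
          have h3 : g (x - τ) ≤ h (x - τ) := hdel x hx.1.le hx.2.le
          have h0 : 0 ≤ g (x - τ) := hg0 (x - τ) (by linarith [hx.1.le])
            (lt_of_lt_of_le (EReal.coe_lt_coe_iff.mpr (by linarith [hx.2])) hxT.le)
          have hpow : g (x - τ) ^ p ≤ h (x - τ) ^ p :=
            Real.rpow_le_rpow h0 h3 (by linarith)
          nlinarith [hα x, mul_le_mul_of_nonneg_left hpow (hα x)]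
        have := mul_nonpos_of_nonpos_of_nonneg hdiff (Real.exp_pos (-Γ x)).le
        linarith
      have hψdiff : DifferentiableOn ℝ ψ (interior (Icc (0:ℝ) t)) := by
        rw [interior_Icc]
        intro x hx
        exact ((hderiv x hx).differentiableAt).differentiableWithinAt
      have hanti : AntitoneOn ψ (Icc (0:ℝ) t) := by
        apply antitoneOn_of_deriv_nonpos (convex_Icc 0 t) hψc hψdiff
        rw [interior_Icc]; exact hψ'le
      have hψt : ψ t ≤ ψ 0 := hanti (left_mem_Icc.mpr ht0) (right_mem_Icc.mpr ht0) ht0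
      have hψ0 : ψ 0 = 0 := by
        simp [hψdef, (hinit 0 (by linarith) le_rfl).symm]
      rw [hψ0] at hψt
      have : g t - h t ≤ 0 := by
        by_contra hcon
        push_neg at hcon
        have := mul_pos hcon (Real.exp_pos (-Γ t))
        simp only [hψdef] at hψt
        linarith
      linarith
  intro t ht0 htT
  have hn : t ≤ (⌈t / τ⌉₊ : ℕ) * τ := by
    have := Nat.le_ceil (t / τ)
    calc t = t / τ * τ := by field_simp
    _ ≤ (⌈t / τ⌉₊ : ℝ) * τ := by
        exact mul_le_mul_of_nonneg_right this hτ.le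
  exact key ⌈t / τ⌉₊ t ht0 hn htT
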